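/- Let B be an f-adic ring, let A be an open subring of B, and let γ : B → B̂ be the canonical map to the completion of B. Then the smallest subring of B̂ containing γ(B) ∪ cl(γ(A)) is B̂ itself, where cl(γ(A)) denotes the topological closure of γ(A) in B̂. -/

import Mathlib

open Filter Topology

/-- A subset `S` of a topological ring is bounded if for every neighbourhood `U` of `0`
there is a neighbourhood `V` of `0` with `V · S ⊆ U`. -/
def IsBoundedSubset {A : Type*} [CommRing A] [TopologicalSpace A] (S : Set A) : Prop :=
  ∀ U ∈ 𝓝 (0 : A), ∃ V ∈ 𝓝 (0 : A), ∀ v ∈ V, ∀ s ∈ S, v * s ∈ U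

/-- An element of a topological ring is power-bounded if the set of its powers `aⁿ`, `n ≥ 1`,
is bounded. -/
def IsPowerBounded {A : Type*} [CommRing A] [TopologicalSpace A] (a : A) : Prop :=
  IsBoundedSubset {x : A | ∃ n : ℕ, 1 ≤ n ∧ x = a ^ n}

/-- `A°`, the set of power-bounded elements of a topological ring. -/
def powerBounded (A : Type*) [CommRing A] [TopologicalSpace A] : Set A :=
  {a : A | IsPowerBounded a}

/-- `I₀` is an ideal of definition of the subring `A₀` of the topological ring `A` if it is
finitely generated and its powers form a basis of neighbourhoods of `0` in `A`. -/
def IsIdealOfDefinition {A : Type*} [CommRing A] [TopologicalSpace A]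
    (A₀ : Subring A) (I₀ : Ideal A₀) : Prop :=
  I₀.FG ∧ (𝓝 (0 : A)).HasBasis (fun n : ℕ => 1 ≤ n)
    (fun n => ⇑A₀.subtype '' ((I₀ ^ n : Ideal A₀) : Set A₀))

/-- A ring of definition of a topological ring is an open subring admitting an ideal of
definition. -/
def IsRingOfDefinition {A : Type*} [CommRing A] [TopologicalSpace A] (A₀ : Subring A) : Prop :=
  IsOpen (A₀ : Set A) ∧ ∃ I₀ : Ideal A₀, IsIdealOfDefinition A₀ I₀

/-- A topological commutative ring is f-adic if it admits a ring of definition. -/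
def IsFAdic (A : Type*) [CommRing A] [TopologicalSpace A] : Prop :=
  ∃ A₀ : Subring A, IsRingOfDefinition A₀

/-- A subring `S` of `A` is integrally closed in `A` if every element of `A` integral
over `S` lies in `S`. -/
def IsIntegrallyClosedSubring {A : Type*} [CommRing A] (S : Subring A) : Prop :=
  ∀ x : A, IsIntegral S x → x ∈ S

theorem statement9 {B : Type*} [CommRing B] [UniformSpace B] [IsUniformAddGroup B]
    [IsTopologicalRing B] (hB : IsFAdic B)
    (A : Subring B) (hA : IsOpen (A : Set B))
    (γ : B →+* UniformSpace.Completion B)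
    (hγ : γ = UniformSpace.Completion.coeRingHom) :
    Subring.closure (Set.range ⇑γ ∪ closure (⇑γ '' (A : Set B))) = ⊤ := by
  have hγcoe : ⇑γ = ((↑) : B → UniformSpace.Completion B) := by
    subst hγ; rfl
  rw [Subring.eq_top_iff']
  intro x
  set C : Set (UniformSpace.Completion B) := closure (⇑γ '' (A : Set B)) with hCdef
  have hC : C ∈ 𝓝 (0 : UniformSpace.Completion B) := by
    have h0 : (A : Set B) ∈ 𝓝 (0 : B) := hA.mem_nhds A.zero_mem
    have := (UniformSpace.Completion.isDenseInducing_coe (α := B)).closure_image_mem_nhds h0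
    rw [hCdef, hγcoe]
    convert this using 2
    exact (map_zero (UniformSpace.Completion.coeRingHom (α := B))).symm
  have hx : {y : UniformSpace.Completion B | x - y ∈ C} ∈ 𝓝 x := by
    have hcont : Continuous fun y : UniformSpace.Completion B => x - y :=
      continuous_const.sub continuous_id
    have := hcont.continuousAt (x := x) (by simpa using hC)
    exact this
  have hxcl : x ∈ closure (Set.range ⇑γ) := by
    rw [hγcoe, (UniformSpace.Completion.denseRange_coe (α := B)).closure_range]
    trivial
  obtain ⟨y, hy1, b, rfl⟩ := mem_closure_iff_nhds.mp hxcl _ hx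
  have h1 : γ b ∈ Subring.closure (Set.range ⇑γ ∪ C) :=
    Subring.subset_closure (Or.inl ⟨b, rfl⟩)
  have h2 : x - γ b ∈ Subring.closure (Set.range ⇑γ ∪ C) :=
    Subring.subset_closure (Or.inr hy1)
  have := add_mem h1 h2
  simpa using this
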